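/- Let n ≥ 2 and q ≥ 2 be integers, 0 < α < n, let ℓ ≥ h ≥ 0 be integers, let j, k_1, …, k_{q−1} ∈ ℤ with k = min{k_1, …, k_{q−1}}, assume j − h < k − 2 < j − 2, and set r = j − k + ℓ − h. Then there is a constant C = C(n, q, α) such that for all (y,s), (y^1,s^1), …, (y^{q−1},s^{q−1}) ∈ ℝ^n × ℝ, ∬_{Λ_{ℓj}(y,s) ∩ ⋂_{i=1}^{q−1} Λ_{ℓ−h,k_i}(y^i,s^i)} Ω^α(x−y, t−s) ∏_{i=1}^{q−1} Ω^α(x−y^i, t−s^i) dx dt ≤ C 2^{(j−k−h)α/n} ∬_{Λ*_{rj}(y,s) ∩ ⋂_{i=1}^{q−1} Λ*_{ℓ−h,k_i}(y^i,s^i)} Ω^α(x−y, t−s) ∏_{i=1}^{q−1} Ω^α(x−y^i, t−s^i) dx dt. -/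

import Mathlib

open MeasureTheory ENNReal NNReal

noncomputable section

/-- `ℝ^{n+1}` as `ℝ^n × ℝ`. -/
abbrev Pt (n : ℕ) := EuclideanSpace ℝ (Fin n) × ℝ

/-- The open light cone `Λ = {(y,s) : |s| > |y|}`. -/
def lightCone (n : ℕ) : Set (Pt n) := {p | ‖p.1‖ < |p.2|}

/-- The integrand `f(x−y, t−s) (|s|+|y|)^{α−n} (|s|−|y|)^{α/n−1}`. -/
def ker (n : ℕ) (α : ℝ) (f : Pt n → ℝ) (z p : Pt n) : ℝ≥0∞ :=
  ENNReal.ofReal (f (z.1 - p.1, z.2 - p.2)) *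
    ENNReal.ofReal ((|p.2| + ‖p.1‖) ^ (α - n) * (|p.2| - ‖p.1‖) ^ (α / n - 1))

/-- The light-cone fractional integral `I_α f`. -/
def Iop (n : ℕ) (α : ℝ) (f : Pt n → ℝ) (z : Pt n) : ℝ≥0∞ :=
  ∫⁻ p in lightCone n, ker n α f z p

/-- The shifted cone shell `Λ_{ℓj}(x,t)`. -/
def shellAt (n : ℕ) (ℓ j : ℤ) (c : Pt n) : Set (Pt n) :=
  {p | (2:ℝ) ^ j ≤ |p.2 - c.2| + ‖p.1 - c.1‖ ∧ |p.2 - c.2| + ‖p.1 - c.1‖ < (2:ℝ) ^ (j + 1) ∧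
       (2:ℝ) ^ (j - ℓ) ≤ |p.2 - c.2| - ‖p.1 - c.1‖ ∧
       |p.2 - c.2| - ‖p.1 - c.1‖ < (2:ℝ) ^ (j - ℓ + 1)}

/-- The dyadic enlargement `Λ*_{ℓj}(x,t)`. -/
def shellStarAt (n : ℕ) (ℓ j : ℤ) (c : Pt n) : Set (Pt n) :=
  {p | (2:ℝ) ^ (j - 3) ≤ |p.2 - c.2| + ‖p.1 - c.1‖ ∧
       |p.2 - c.2| + ‖p.1 - c.1‖ < (2:ℝ) ^ (j + 3) ∧
       (2:ℝ) ^ (j - ℓ - 3) ≤ |p.2 - c.2| - ‖p.1 - c.1‖ ∧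
       |p.2 - c.2| - ‖p.1 - c.1‖ < (2:ℝ) ^ (j - ℓ + 3)}

/-- The cone shell `Λ_{ℓj}` (centered at the origin). -/
def shell (n : ℕ) (ℓ j : ℤ) : Set (Pt n) := shellAt n ℓ j 0

/-- The discrete dyadic cone `Λ_ℓ = ⋃_j Λ_{ℓj}`. -/
def Lam (n : ℕ) (ℓ : ℤ) : Set (Pt n) := ⋃ j : ℤ, shell n ℓ j

/-- The partial operator `Δ_{ℓj} I_α f`. -/
def Dlj (n : ℕ) (α : ℝ) (ℓ j : ℤ) (f : Pt n → ℝ) (z : Pt n) : ℝ≥0∞ :=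
  ∫⁻ p in shell n ℓ j, ker n α f z p

/-- The partial operator `Δ_ℓ I_α f`. -/
def Dl (n : ℕ) (α : ℝ) (ℓ : ℤ) (f : Pt n → ℝ) (z : Pt n) : ℝ≥0∞ :=
  ∫⁻ p in Lam n ℓ, ker n α f z p

/-- `θ_ℓ(x,t) = ‖f‖_p^{−p} ∬_{Λ_ℓ} f(x−y,t−s)^p dy ds`. -/
def theta (n : ℕ) (p : ℝ) (f : Pt n → ℝ) (ℓ : ℤ) (z : Pt n) : ℝ≥0∞ :=
  (∫⁻ w in Lam n ℓ, ENNReal.ofReal (f (z.1 - w.1, z.2 - w.2)) ^ p) /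
    eLpNorm f (ENNReal.ofReal p) volume ^ p

/-- The cone of directions `Γ^ν_η` with central direction `e`. -/
def coneDir (n η : ℕ) (e : EuclideanSpace ℝ (Fin n)) : Set (EuclideanSpace ℝ (Fin n)) :=
  {y | y ≠ 0 ∧ ‖(‖y‖⁻¹ • y) - e‖ ≤ 4 * (2:ℝ) ^ (-(η:ℝ))}

/-- The directional maximal operator `M^ν_η`. -/
def Mnu (n η : ℕ) (e : EuclideanSpace ℝ (Fin n)) (f : Pt n → ℝ) (z : Pt n) : ℝ≥0∞ :=
  ⨆ (ℓ : ℕ) (_ : ℓ ≤ η) (j : ℤ),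
    (ENNReal.ofReal ((2:ℝ) ^ j * (2:ℝ) ^ (j - (ℓ:ℤ)) * (2:ℝ) ^ ((j - (η:ℤ)) * ((n:ℤ) - 1))))⁻¹ *
      ∫⁻ p in {p : Pt n | p ∈ shell n ℓ j ∧ p.1 ∈ coneDir n η e},
        ENNReal.ofReal (f (z.1 - p.1, z.2 - p.2))

/-- The averaged maximal operator `M_η`. -/
def Meta (n η : ℕ) {ι : Type} [Fintype ι] (y : ι → EuclideanSpace ℝ (Fin n)) (f : Pt n → ℝ)
    (z : Pt n) : ℝ≥0∞ :=
  (ENNReal.ofReal ((2:ℝ) ^ ((η:ℤ) * ((n:ℤ) - 1))))⁻¹ * ∑ ν, Mnu n η (y ν) f z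

/-- `Ω^α(x,t) = (|t|+|x|)^{α−n} (|t|−|x|)^{α/n−1}`. -/
def Om (n : ℕ) (α : ℝ) (p : Pt n) : ℝ≥0∞ :=
  ENNReal.ofReal ((|p.2| + ‖p.1‖) ^ (α - n) * (|p.2| - ‖p.1‖) ^ (α / n - 1))


lemma omega_ratio (n : ℕ) (α : ℝ) (hα0 : 0 < α) (hαn : α < n)
    {u v u' v' K : ℝ} (hu : 0 < u) (hv : 0 < v) (hu' : 0 < u') (hv' : 0 < v')
    (hK : 1 ≤ K) (h1 : u' ≤ 2 * u) (h2 : v' ≤ K * v) :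
    u ^ (α - n) * v ^ (α / n - 1) ≤
      (2 ^ ((n : ℝ) - α) * K ^ (1 - α / n)) * (u' ^ (α - n) * v' ^ (α / n - 1)) := by
  have hn : (0:ℝ) < n := lt_trans hα0 hαn
  have hK0 : (0:ℝ) < K := lt_of_lt_of_le one_pos hK
  have han : α / n < 1 := (div_lt_one hn).2 hαn
  have ha0 : 0 < α / n := div_pos hα0 hn
  have h1' : u' / 2 ≤ u := by linarith
  have hA : u ^ (α - n) ≤ (u' / 2) ^ (α - n) :=
    Real.rpow_le_rpow_of_nonpos (by positivity) h1' (by linarith)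
  have h2pow : (2:ℝ) ^ ((n:ℝ) - α) * (2:ℝ) ^ (α - (n:ℝ)) = 1 := by
    rw [← Real.rpow_add two_pos]; norm_num
  have hA2 : (u' / 2) ^ (α - n) = 2 ^ ((n:ℝ) - α) * u' ^ (α - n) := by
    rw [Real.div_rpow hu'.le (by norm_num : (0:ℝ) ≤ 2),
      div_eq_iff (by positivity : ((2:ℝ) ^ (α - (n:ℝ))) ≠ 0)]
    linear_combination (-(u' ^ (α - (n:ℝ)))) * h2pow
  have h2' : v' / K ≤ v := by rw [div_le_iff₀ hK0]; linarith [h2]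
  have hB : v ^ (α / n - 1) ≤ (v' / K) ^ (α / n - 1) :=
    Real.rpow_le_rpow_of_nonpos (by positivity) h2' (by linarith)
  have hKpow : K ^ (1 - α / (n:ℝ)) * K ^ (α / (n:ℝ) - 1) = 1 := by
    rw [← Real.rpow_add hK0]; norm_num
  have hB2 : (v' / K) ^ (α / n - 1) = K ^ (1 - α / n) * v' ^ (α / n - 1) := by
    rw [Real.div_rpow hv'.le hK0.le,
      div_eq_iff (by positivity : (K ^ (α / (n:ℝ) - 1)) ≠ 0)]
    linear_combination (-(v' ^ (α / (n:ℝ) - 1))) * hKpow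
  calc u ^ (α - n) * v ^ (α / n - 1)
      ≤ (2 ^ ((n:ℝ) - α) * u' ^ (α - n)) * (K ^ (1 - α / n) * v' ^ (α / n - 1)) := by
        rw [← hA2, ← hB2]
        exact mul_le_mul hA hB (by positivity) (by positivity)
    _ = (2 ^ ((n : ℝ) - α) * K ^ (1 - α / n)) * (u' ^ (α - n) * v' ^ (α / n - 1)) := by ring

lemma keyPointwise (n : ℕ) (q' : ℕ) (α : ℝ) (hα0 : 0 < α) (hαn : α < n)
    (ℓ h j k : ℤ) (κ : Fin q' → ℤ) (hκ : ∀ i, k ≤ κ i)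
    (h0 : 0 ≤ h) (hhl : h ≤ ℓ) (hj1 : j ≤ k + h - 3) (hk1 : k + 1 ≤ j)
    (c : Pt n) (ci : Fin q' → Pt n) (z : Pt n)
    (hzc : z ∈ shellAt n ℓ j c) (hzi : ∀ i, z ∈ shellAt n (ℓ - h) (κ i) (ci i))
    (τ : ℝ) (hτ1 : (2:ℝ) ^ (k + h - ℓ - 2) ≤ τ) (hτ2 : τ ≤ (2:ℝ) ^ (k + h - ℓ - 1)) :
    ∃ t' : ℝ, (t' = z.2 + τ ∨ t' = z.2 - τ) ∧
      (z.1, t') ∈ shellStarAt n (j - k + ℓ - h) j c ∧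
      (∀ i, (z.1, t') ∈ shellStarAt n (ℓ - h) (κ i) (ci i)) ∧
      Om n α (z.1 - c.1, z.2 - c.2) * ∏ i, Om n α (z.1 - (ci i).1, z.2 - (ci i).2) ≤
        ENNReal.ofReal ((2 ^ ((n:ℝ) - α) * ((2:ℝ) ^ (k + h - j)) ^ (1 - α / n)) *
            (2 ^ ((n:ℝ) - α) * 2 ^ (1 - α / (n:ℝ))) ^ q') *
          (Om n α (z.1 - c.1, t' - c.2) * ∏ i, Om n α (z.1 - (ci i).1, t' - (ci i).2)) := by
  have hn0 : (0:ℝ) < n := lt_trans hα0 hαn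
  have P : ∀ m m' : ℤ, m ≤ m' → (2:ℝ) ^ m ≤ (2:ℝ) ^ m' :=
    fun _ _ hm => zpow_le_zpow_right₀ one_le_two hm
  have Ppos : ∀ m : ℤ, (0:ℝ) < (2:ℝ) ^ m := fun m => zpow_pos two_pos m
  have Pe : ∀ (m m' : ℤ) (a : ℕ), m' = m + a → (2:ℝ) ^ m' = 2 ^ a * (2:ℝ) ^ m := by
    intro m m' a hm
    subst hm
    rw [zpow_add₀ (by norm_num : (2:ℝ) ≠ 0), zpow_natCast]; ring
  obtain ⟨hc1, hc2, hc3, hc4⟩ := hzc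
  have hτ0 : 0 < τ := lt_of_lt_of_le (Ppos _) hτ1
  obtain ⟨t', ht'or, habs⟩ : ∃ t', (t' = z.2 + τ ∨ t' = z.2 - τ) ∧
      |t' - c.2| = |z.2 - c.2| + τ := by
    rcases le_or_gt c.2 z.2 with hs | hs
    · exact ⟨z.2 + τ, Or.inl rfl, by
        rw [abs_of_nonneg (by linarith), abs_of_nonneg (by linarith)]; ring⟩
    · exact ⟨z.2 - τ, Or.inr rfl, by
        rw [abs_of_nonpos (by linarith), abs_of_nonpos (by linarith)]; ring⟩
  have hdist : ∀ w : ℝ, |z.2 - w| - τ ≤ |t' - w| ∧ |t' - w| ≤ |z.2 - w| + τ := by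
    intro w
    have h1 : |t' - z.2| = τ := by
      rcases ht'or with rfl | rfl
      · rw [show z.2 + τ - z.2 = τ by ring, abs_of_nonneg hτ0.le]
      · rw [show z.2 - τ - z.2 = -τ by ring, abs_neg, abs_of_nonneg hτ0.le]
    have h2 : |z.2 - t'| = τ := by rw [abs_sub_comm]; exact h1
    exact ⟨by have := abs_sub_le z.2 t' w; linarith,
           by have := abs_sub_le t' z.2 w; linarith⟩
  -- facts for the c shell
  have hτj2 : τ ≤ (2:ℝ) ^ (j - 2) := le_trans hτ2 (P _ _ (by omega))
  have hstarc : (z.1, t') ∈ shellStarAt n (j - k + ℓ - h) j c := by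
    simp only [shellStarAt, Set.mem_setOf_eq]
    rw [habs,
      show j - (j - k + ℓ - h) - 3 = k + h - ℓ - 3 by ring,
      show j - (j - k + ℓ - h) + 3 = k + h - ℓ + 3 by ring]
    have e2 : (2:ℝ) ^ (j + 3) = 8 * 2 ^ j := by
      have := Pe j (j+3) 3 (by omega); norm_num at this; linarith
    have e3 : (2:ℝ) ^ (j + 1) = 2 * 2 ^ j := by
      have := Pe j (j+1) 1 (by omega); norm_num at this; linarith
    have f4 : (2:ℝ) ^ (j - 2) ≤ 2 ^ j := P _ _ (by omega)
    have hp2 : (2:ℝ) ^ (j - ℓ + 1) ≤ 2 ^ (k + h - ℓ - 2) := P _ _ (by omega)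
    have eT1 : (2:ℝ) ^ (k + h - ℓ - 1) = 2 * 2 ^ (k + h - ℓ - 2) := by
      have := Pe (k+h-ℓ-2) (k+h-ℓ-1) 1 (by omega); norm_num at this; linarith
    have eT2 : (2:ℝ) ^ (k + h - ℓ + 3) = 32 * 2 ^ (k + h - ℓ - 2) := by
      have := Pe (k+h-ℓ-2) (k+h-ℓ+3) 5 (by omega); norm_num at this; linarith
    refine ⟨?_, ?_, ?_, ?_⟩
    · have := P (j-3) j (by omega); linarith
    · linarith [Ppos j]
    · have := P (k+h-ℓ-3) (k+h-ℓ-2) (by omega); linarith [Ppos (j - ℓ)]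
    · linarith [Ppos (k+h-ℓ-2)]
  have hstari : ∀ i, (z.1, t') ∈ shellStarAt n (ℓ - h) (κ i) (ci i) := by
    intro i
    obtain ⟨hi1, hi2, hi3, hi4⟩ := hzi i
    have hκi := hκ i
    have hτi : τ ≤ (2:ℝ) ^ (κ i - (ℓ - h) - 1) := le_trans hτ2 (P _ _ (by omega))
    have hdi := hdist (ci i).2
    have eA : (2:ℝ) ^ (κ i) = 2 * 2 ^ (κ i - 1) := by
      have := Pe (κ i - 1) (κ i) 1 (by omega); norm_num at this; linarith
    have eB : (2:ℝ) ^ (κ i + 1) = 4 * 2 ^ (κ i - 1) := by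
      have := Pe (κ i - 1) (κ i + 1) 2 (by omega); norm_num at this; linarith
    have eC : (2:ℝ) ^ (κ i + 3) = 16 * 2 ^ (κ i - 1) := by
      have := Pe (κ i - 1) (κ i + 3) 4 (by omega); norm_num at this; linarith
    have fD : (2:ℝ) ^ (κ i - (ℓ - h) - 1) ≤ 2 ^ (κ i - 1) := P _ _ (by omega)
    have fE : (2:ℝ) ^ (κ i - 3) ≤ 2 ^ (κ i - 1) := P _ _ (by omega)
    have eF : (2:ℝ) ^ (κ i - (ℓ - h)) = 2 * 2 ^ (κ i - (ℓ - h) - 1) := by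
      have := Pe (κ i - (ℓ-h) - 1) (κ i - (ℓ-h)) 1 (by omega); norm_num at this; linarith
    have eG : (2:ℝ) ^ (κ i - (ℓ - h) + 1) = 4 * 2 ^ (κ i - (ℓ - h) - 1) := by
      have := Pe (κ i - (ℓ-h) - 1) (κ i - (ℓ-h) + 1) 2 (by omega); norm_num at this; linarith
    have eH : (2:ℝ) ^ (κ i - (ℓ - h) + 3) = 16 * 2 ^ (κ i - (ℓ - h) - 1) := by
      have := Pe (κ i - (ℓ-h) - 1) (κ i - (ℓ-h) + 3) 4 (by omega); norm_num at this; linarith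
    have fI : (2:ℝ) ^ (κ i - (ℓ - h) - 3) ≤ 2 ^ (κ i - (ℓ - h) - 1) := P _ _ (by omega)
    simp only [shellStarAt, Set.mem_setOf_eq]
    refine ⟨?_, ?_, ?_, ?_⟩
    · linarith [hdi.1]
    · linarith [hdi.2, Ppos (κ i - 1)]
    · linarith [hdi.1]
    · linarith [hdi.2, Ppos (κ i - (ℓ - h) - 1)]
  -- ratio part
  refine ⟨t', ht'or, hstarc, hstari, ?_⟩
  have hvpos : 0 < |z.2 - c.2| - ‖z.1 - c.1‖ := lt_of_lt_of_le (Ppos _) hc3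
  have hupos : 0 < |z.2 - c.2| + ‖z.1 - c.1‖ := lt_of_lt_of_le (Ppos _) hc1
  have hv'pos : 0 < |t' - c.2| - ‖z.1 - c.1‖ := by rw [habs]; linarith
  have hu'pos : 0 < |t' - c.2| + ‖z.1 - c.1‖ := by rw [habs]; linarith
  have hKc1 : (1:ℝ) ≤ (2:ℝ) ^ (k + h - j) := one_le_zpow₀ one_le_two (by omega)
  have hmulz : (2:ℝ) ^ (k + h - j) * 2 ^ (j - ℓ) = 2 ^ (k + h - ℓ) := by
    rw [← zpow_add₀ (by norm_num : (2:ℝ) ≠ 0)]; congr 1; ring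
  have hTe : (2:ℝ) ^ (k + h - ℓ) = 4 * 2 ^ (k + h - ℓ - 2) := by
    have := Pe (k+h-ℓ-2) (k+h-ℓ) 2 (by omega); norm_num at this; linarith
  have eT1 : (2:ℝ) ^ (k + h - ℓ - 1) = 2 * 2 ^ (k + h - ℓ - 2) := by
    have := Pe (k+h-ℓ-2) (k+h-ℓ-1) 1 (by omega); norm_num at this; linarith
  have hp2 : (2:ℝ) ^ (j - ℓ + 1) ≤ 2 ^ (k + h - ℓ - 2) := P _ _ (by omega)
  have hratc : (|z.2 - c.2| + ‖z.1 - c.1‖) ^ (α - n) * (|z.2 - c.2| - ‖z.1 - c.1‖) ^ (α / n - 1) ≤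
      (2 ^ ((n:ℝ) - α) * ((2:ℝ) ^ (k + h - j)) ^ (1 - α / n)) *
        ((|t' - c.2| + ‖z.1 - c.1‖) ^ (α - n) * (|t' - c.2| - ‖z.1 - c.1‖) ^ (α / n - 1)) := by
    refine omega_ratio n α hα0 hαn hupos hvpos hu'pos hv'pos hKc1 ?_ ?_
    · rw [habs]; linarith [P (j-2) j (by omega)]
    · rw [habs]
      have hge : (2:ℝ) ^ (k + h - ℓ) ≤ 2 ^ (k + h - j) * (|z.2 - c.2| - ‖z.1 - c.1‖) := by
        rw [← hmulz]
        exact mul_le_mul_of_nonneg_left hc3 (Ppos _).le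
      linarith
  have hrati : ∀ i,
      (|z.2 - (ci i).2| + ‖z.1 - (ci i).1‖) ^ (α - n) *
        (|z.2 - (ci i).2| - ‖z.1 - (ci i).1‖) ^ (α / n - 1) ≤
      (2 ^ ((n:ℝ) - α) * 2 ^ (1 - α / (n:ℝ))) *
        ((|t' - (ci i).2| + ‖z.1 - (ci i).1‖) ^ (α - n) *
          (|t' - (ci i).2| - ‖z.1 - (ci i).1‖) ^ (α / n - 1)) := by
    intro i
    obtain ⟨hi1, hi2, hi3, hi4⟩ := hzi i
    have hτi : τ ≤ (2:ℝ) ^ (κ i - (ℓ - h) - 1) := le_trans hτ2 (P _ _ (by have := hκ i; omega))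
    have hdi := hdist (ci i).2
    have eF : (2:ℝ) ^ (κ i - (ℓ - h)) = 2 * 2 ^ (κ i - (ℓ - h) - 1) := by
      have := Pe (κ i - (ℓ-h) - 1) (κ i - (ℓ-h)) 1 (by omega); norm_num at this; linarith
    have hTi := Ppos (κ i - (ℓ - h) - 1)
    have hRi : (0:ℝ) ≤ ‖z.1 - (ci i).1‖ := norm_nonneg _
    refine omega_ratio n α hα0 hαn (lt_of_lt_of_le (Ppos _) hi1)
      (lt_of_lt_of_le (Ppos _) hi3) (by linarith [hdi.1]) (by linarith [hdi.1])
      (by norm_num) (by linarith [hdi.2]) (by linarith [hdi.2])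
  -- combine in ℝ≥0∞
  have hDc0 : 0 ≤ (2:ℝ) ^ ((n:ℝ) - α) * ((2:ℝ) ^ (k + h - j)) ^ (1 - α / (n:ℝ)) := by positivity
  have hD10 : 0 ≤ (2:ℝ) ^ ((n:ℝ) - α) * (2:ℝ) ^ (1 - α / (n:ℝ)) := by positivity
  have step_c : Om n α (z.1 - c.1, z.2 - c.2) ≤
      ENNReal.ofReal (2 ^ ((n:ℝ) - α) * ((2:ℝ) ^ (k + h - j)) ^ (1 - α / n)) *
        Om n α (z.1 - c.1, t' - c.2) := by
    simp only [Om]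
    rw [← ENNReal.ofReal_mul hDc0]
    exact ENNReal.ofReal_le_ofReal hratc
  have step_i : ∀ i ∈ Finset.univ, Om n α (z.1 - (ci i).1, z.2 - (ci i).2) ≤
      ENNReal.ofReal (2 ^ ((n:ℝ) - α) * 2 ^ (1 - α / (n:ℝ))) *
        Om n α (z.1 - (ci i).1, t' - (ci i).2) := by
    intro i _
    simp only [Om]
    rw [← ENNReal.ofReal_mul hD10]
    exact ENNReal.ofReal_le_ofReal (hrati i)
  calc Om n α (z.1 - c.1, z.2 - c.2) * ∏ i, Om n α (z.1 - (ci i).1, z.2 - (ci i).2)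
      ≤ (ENNReal.ofReal (2 ^ ((n:ℝ) - α) * ((2:ℝ) ^ (k + h - j)) ^ (1 - α / n)) *
          Om n α (z.1 - c.1, t' - c.2)) *
        ∏ i, (ENNReal.ofReal (2 ^ ((n:ℝ) - α) * 2 ^ (1 - α / (n:ℝ))) *
          Om n α (z.1 - (ci i).1, t' - (ci i).2)) :=
      mul_le_mul' step_c (Finset.prod_le_prod' step_i)
    _ = ENNReal.ofReal ((2 ^ ((n:ℝ) - α) * ((2:ℝ) ^ (k + h - j)) ^ (1 - α / n)) *
            (2 ^ ((n:ℝ) - α) * 2 ^ (1 - α / (n:ℝ))) ^ q') *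
          (Om n α (z.1 - c.1, t' - c.2) * ∏ i, Om n α (z.1 - (ci i).1, t' - (ci i).2)) := by
      rw [Finset.prod_mul_distrib, Finset.prod_const, Finset.card_univ, Fintype.card_fin,
        ENNReal.ofReal_mul hDc0, ENNReal.ofReal_pow hD10]
      ring

lemma measurable_plus (n : ℕ) (c : Pt n) :
    Measurable fun p : Pt n => |p.2 - c.2| + ‖p.1 - c.1‖ :=
  ((measurable_snd.sub measurable_const).abs.add
    ((measurable_fst.sub measurable_const).norm))

lemma measurable_minus (n : ℕ) (c : Pt n) :
    Measurable fun p : Pt n => |p.2 - c.2| - ‖p.1 - c.1‖ :=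
  ((measurable_snd.sub measurable_const).abs.sub
    ((measurable_fst.sub measurable_const).norm))

lemma measurableSet_shellAt (n : ℕ) (ℓ j : ℤ) (c : Pt n) :
    MeasurableSet (shellAt n ℓ j c) := by
  simp only [shellAt, Set.setOf_and]
  exact ((measurableSet_le measurable_const (measurable_plus n c)).inter
    ((measurableSet_lt (measurable_plus n c) measurable_const).inter
    ((measurableSet_le measurable_const (measurable_minus n c)).inter
    (measurableSet_lt (measurable_minus n c) measurable_const))))

lemma measurableSet_shellStarAt (n : ℕ) (ℓ j : ℤ) (c : Pt n) :
    MeasurableSet (shellStarAt n ℓ j c) := by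
  simp only [shellStarAt, Set.setOf_and]
  exact ((measurableSet_le measurable_const (measurable_plus n c)).inter
    ((measurableSet_lt (measurable_plus n c) measurable_const).inter
    ((measurableSet_le measurable_const (measurable_minus n c)).inter
    (measurableSet_lt (measurable_minus n c) measurable_const))))

lemma measurable_rpow_const' (cst : ℝ) : Measurable fun x : ℝ => x ^ cst :=
  measurable_of_continuousOn_compl_singleton 0
    (ContinuousOn.rpow_const continuousOn_id fun x hx => Or.inl hx)

lemma measurable_Om_shift (n : ℕ) (α : ℝ) (w : Pt n) :
    Measurable fun z : Pt n => Om n α (z.1 - w.1, z.2 - w.2) := by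
  simp only [Om]
  exact ENNReal.measurable_ofReal.comp
    (((measurable_rpow_const' (α - n)).comp (measurable_plus n w)).mul
     ((measurable_rpow_const' (α / n - 1)).comp (measurable_minus n w)))

lemma shell_slice (n : ℕ) (ℓ j : ℤ) (c : Pt n) (x : EuclideanSpace ℝ (Fin n)) :
    volume {t : ℝ | (x, t) ∈ shellAt n ℓ j c} ≤ ENNReal.ofReal ((2:ℝ) ^ (j - ℓ + 1)) := by
  have hsub : {t : ℝ | (x, t) ∈ shellAt n ℓ j c} ⊆
      Set.Ico (c.2 + ((2:ℝ) ^ (j - ℓ) + ‖x - c.1‖)) (c.2 + ((2:ℝ) ^ (j - ℓ + 1) + ‖x - c.1‖)) ∪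
      Set.Ioc (c.2 - ((2:ℝ) ^ (j - ℓ + 1) + ‖x - c.1‖)) (c.2 - ((2:ℝ) ^ (j - ℓ) + ‖x - c.1‖)) := by
    intro t ht
    obtain ⟨h1, h2, h3, h4⟩ := ht
    simp only [Set.mem_union, Set.mem_Ico, Set.mem_Ioc]
    rcases le_or_gt c.2 t with hs | hs
    · left
      have habs : |t - c.2| = t - c.2 := abs_of_nonneg (by linarith)
      rw [habs] at h3 h4
      constructor <;> linarith
    · right
      have habs : |t - c.2| = -(t - c.2) := abs_of_neg (by linarith)
      rw [habs] at h3 h4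
      constructor <;> linarith
  have hpow : (2:ℝ) ^ (j - ℓ + 1) = 2 * 2 ^ (j - ℓ) := by
    rw [zpow_add₀ (by norm_num : (2:ℝ) ≠ 0)]; ring
  calc volume {t : ℝ | (x, t) ∈ shellAt n ℓ j c}
      ≤ volume (Set.Ico (c.2 + ((2:ℝ) ^ (j - ℓ) + ‖x - c.1‖))
            (c.2 + ((2:ℝ) ^ (j - ℓ + 1) + ‖x - c.1‖)) ∪
          Set.Ioc (c.2 - ((2:ℝ) ^ (j - ℓ + 1) + ‖x - c.1‖))
            (c.2 - ((2:ℝ) ^ (j - ℓ) + ‖x - c.1‖))) := measure_mono hsub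
    _ ≤ volume (Set.Ico (c.2 + ((2:ℝ) ^ (j - ℓ) + ‖x - c.1‖))
            (c.2 + ((2:ℝ) ^ (j - ℓ + 1) + ‖x - c.1‖))) +
        volume (Set.Ioc (c.2 - ((2:ℝ) ^ (j - ℓ + 1) + ‖x - c.1‖))
            (c.2 - ((2:ℝ) ^ (j - ℓ) + ‖x - c.1‖))) := measure_union_le _ _
    _ = ENNReal.ofReal ((2:ℝ) ^ (j - ℓ)) + ENNReal.ofReal ((2:ℝ) ^ (j - ℓ)) := by
        rw [Real.volume_Ico, Real.volume_Ioc]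
        congr 1 <;> · rw [hpow]; congr 1; ring
    _ = ENNReal.ofReal ((2:ℝ) ^ (j - ℓ + 1)) := by
        rw [← ENNReal.ofReal_add (by positivity) (by positivity), hpow]; congr 1; ring

lemma lintegral_comp_neg (g : ℝ → ℝ≥0∞) (hg : Measurable g) :
    ∫⁻ τ : ℝ, g (-τ) = ∫⁻ u : ℝ, g u := by
  conv_rhs => rw [← Measure.map_neg_eq_self (volume : Measure ℝ)]
  rw [lintegral_map hg measurable_neg]

lemma flip_integral (f : ℝ → ℝ≥0∞) (hf : Measurable f) (s : Set ℝ) (hsm : MeasurableSet s)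
    (t : ℝ) : ∫⁻ τ in s, f (t - τ) = ∫⁻ τ in -s, f (t + τ) := by
  rw [← lintegral_indicator hsm, ← lintegral_indicator hsm.neg,
    ← lintegral_comp_neg (fun τ => (-s).indicator (fun τ => f (t + τ)) τ)
      ((hf.comp (measurable_const.add measurable_id)).indicator hsm.neg)]
  congr 1; funext τ
  by_cases hτ : τ ∈ s
  · rw [Set.indicator_of_mem hτ, Set.indicator_of_mem (by simpa [Set.mem_neg] : -τ ∈ -s)]
    norm_num [sub_eq_add_neg]
  · rw [Set.indicator_of_notMem hτ, Set.indicator_of_notMem (by simpa [Set.mem_neg] : ¬(-τ ∈ -s))]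

lemma T_bound (n : ℕ) (ℓ j : ℤ) (c : Pt n) (A : Set (Pt n)) (hAm : MeasurableSet A)
    (hAsub : A ⊆ shellAt n ℓ j c) (G : Pt n → ℝ≥0∞) (hGM : Measurable G)
    (hGtop : ∀ p, G p ≠ ⊤) (s : Set ℝ) (hsm : MeasurableSet s) :
    ∫⁻ z : Pt n, ∫⁻ τ in s, (A.indicator (fun _ => (1:ℝ≥0∞)) z) * G (z.1, z.2 + τ) ≤
      ENNReal.ofReal ((2:ℝ) ^ (j - ℓ + 1)) * ∫⁻ w : Pt n, G w := by
  have hindM : Measurable (A.indicator (fun _ => (1:ℝ≥0∞))) := measurable_const.indicator hAm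
  have hindle : ∀ z, A.indicator (fun _ => (1:ℝ≥0∞)) z ≤ 1 := by
    intro z; by_cases hz : z ∈ A <;> simp [hz]
  have hindtop : ∀ z, A.indicator (fun _ => (1:ℝ≥0∞)) z ≠ ⊤ :=
    fun z => ((hindle z).trans_lt ENNReal.one_lt_top).ne
  have hindsle : ∀ u, s.indicator (fun _ => (1:ℝ≥0∞)) u ≤ 1 := by
    intro u; by_cases hu : u ∈ s <;> simp [hu]
  have huncurry : Measurable fun p : Pt n × ℝ =>
      (A.indicator (fun _ => (1:ℝ≥0∞)) p.1) * G (p.1.1, p.1.2 + p.2) :=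
    (hindM.comp measurable_fst).mul
      (hGM.comp ((measurable_fst.fst).prodMk ((measurable_fst.snd).add measurable_snd)))
  have hΦM : Measurable fun z : Pt n =>
      ∫⁻ τ in s, (A.indicator (fun _ => (1:ℝ≥0∞)) z) * G (z.1, z.2 + τ) :=
    Measurable.lintegral_prod_right' (f := fun p : Pt n × ℝ =>
      (A.indicator (fun _ => (1:ℝ≥0∞)) p.1) * G (p.1.1, p.1.2 + p.2)) huncurry
  rw [MeasureTheory.Measure.volume_eq_prod, lintegral_prod _ hΦM.aemeasurable, lintegral_prod _ hGM.aemeasurable]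
  have key : ∀ x : EuclideanSpace ℝ (Fin n),
      (∫⁻ t : ℝ, ∫⁻ τ in s, (A.indicator (fun _ => (1:ℝ≥0∞)) (x, t)) * G (x, t + τ)) ≤
        ENNReal.ofReal ((2:ℝ) ^ (j - ℓ + 1)) * ∫⁻ w : ℝ, G (x, w) := by
    intro x
    have hSxm : MeasurableSet {t : ℝ | (x, t) ∈ shellAt n ℓ j c} :=
      (measurableSet_shellAt n ℓ j c).preimage measurable_prodMk_left
    have e2 : ∀ t : ℝ, (∫⁻ τ in s, G (x, t + τ)) =
        ∫⁻ w : ℝ, s.indicator (fun _ => (1:ℝ≥0∞)) (w - t) * G (x, w) := by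
      intro t
      rw [← lintegral_indicator hsm]
      calc ∫⁻ τ, s.indicator (fun τ => G (x, t + τ)) τ
          = ∫⁻ τ, (fun w : ℝ => s.indicator (fun _ => (1:ℝ≥0∞)) (w - t) * G (x, w)) (τ + t) := by
            congr 1; funext τ
            dsimp only
            rw [show τ + t - t = τ by ring, add_comm τ t]
            by_cases hτ : τ ∈ s
            · rw [Set.indicator_of_mem hτ, Set.indicator_of_mem hτ, one_mul]
            · rw [Set.indicator_of_notMem hτ, Set.indicator_of_notMem hτ, zero_mul]
        _ = ∫⁻ w : ℝ, s.indicator (fun _ => (1:ℝ≥0∞)) (w - t) * G (x, w) :=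
            lintegral_add_right_eq_self
              (fun w : ℝ => s.indicator (fun _ => (1:ℝ≥0∞)) (w - t) * G (x, w)) t
    calc ∫⁻ t : ℝ, ∫⁻ τ in s, (A.indicator (fun _ => (1:ℝ≥0∞)) (x, t)) * G (x, t + τ)
        = ∫⁻ t : ℝ, ∫⁻ w : ℝ, (A.indicator (fun _ => (1:ℝ≥0∞)) (x, t)) *
            (s.indicator (fun _ => (1:ℝ≥0∞)) (w - t) * G (x, w)) := by
          apply lintegral_congr; intro t
          rw [lintegral_const_mul' _ _ (hindtop _), e2 t,
            ← lintegral_const_mul' _ _ (hindtop _)]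
      _ = ∫⁻ w : ℝ, ∫⁻ t : ℝ, (A.indicator (fun _ => (1:ℝ≥0∞)) (x, t)) *
            (s.indicator (fun _ => (1:ℝ≥0∞)) (w - t) * G (x, w)) := by
          apply lintegral_lintegral_swap
          apply Measurable.aemeasurable
          exact ((hindM.comp (measurable_const.prodMk measurable_fst)).mul
            (((measurable_const.indicator hsm).comp (measurable_snd.sub measurable_fst)).mul
              (hGM.comp (measurable_const.prodMk measurable_snd))))
      _ ≤ ∫⁻ w : ℝ, ENNReal.ofReal ((2:ℝ) ^ (j - ℓ + 1)) * G (x, w) := by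
          apply lintegral_mono; intro w
          calc ∫⁻ t : ℝ, (A.indicator (fun _ => (1:ℝ≥0∞)) (x, t)) *
                (s.indicator (fun _ => (1:ℝ≥0∞)) (w - t) * G (x, w))
              ≤ ∫⁻ t : ℝ, ({t : ℝ | (x, t) ∈ shellAt n ℓ j c}.indicator
                  (fun _ => (1:ℝ≥0∞)) t) * G (x, w) := by
                apply lintegral_mono; intro t
                dsimp only
                by_cases hz : (x, t) ∈ A
                · rw [Set.indicator_of_mem hz,
                    Set.indicator_of_mem (show t ∈ {t : ℝ | (x, t) ∈ shellAt n ℓ j c}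
                      from hAsub hz), one_mul, one_mul]
                  exact mul_le_of_le_one_left zero_le (hindsle _)
                · rw [Set.indicator_of_notMem hz, zero_mul]; exact zero_le
              _ = volume {t : ℝ | (x, t) ∈ shellAt n ℓ j c} * G (x, w) := by
                rw [lintegral_mul_const' _ _ (hGtop _), lintegral_indicator hSxm,
                  setLIntegral_one]
              _ ≤ ENNReal.ofReal ((2:ℝ) ^ (j - ℓ + 1)) * G (x, w) :=
                mul_le_mul_left (shell_slice n ℓ j c x) _
      _ = ENNReal.ofReal ((2:ℝ) ^ (j - ℓ + 1)) * ∫⁻ w : ℝ, G (x, w) :=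
          lintegral_const_mul' _ _ ofReal_ne_top
  calc ∫⁻ x, ∫⁻ t : ℝ, ∫⁻ τ in s, (A.indicator (fun _ => (1:ℝ≥0∞)) (x, t)) * G (x, t + τ)
      ≤ ∫⁻ x, ENNReal.ofReal ((2:ℝ) ^ (j - ℓ + 1)) * ∫⁻ w : ℝ, G (x, w) := lintegral_mono key
    _ = ENNReal.ofReal ((2:ℝ) ^ (j - ℓ + 1)) * ∫⁻ x, ∫⁻ w : ℝ, G (x, w) :=
        lintegral_const_mul' _ _ ofReal_ne_top

lemma final_const (n q : ℕ) (α : ℝ) (hα0 : 0 < α) (hαn : α < n) (hq : 1 ≤ q)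
    (ℓ h j k : ℤ) :
    ((2:ℝ) ^ (k + h - ℓ - 2))⁻¹ *
      (((2:ℝ) ^ ((n:ℝ) - α) * ((2:ℝ) ^ (k + h - j)) ^ (1 - α / n)) *
        ((2:ℝ) ^ ((n:ℝ) - α) * (2:ℝ) ^ (1 - α / (n:ℝ))) ^ (q - 1) *
      (2 * (2:ℝ) ^ (j - ℓ + 1))) ≤
    (2:ℝ) ^ ((n + 1) * q + 4) * (2:ℝ) ^ (((j:ℝ) - k - h) * (α / n)) := by
  have hn0 : (0:ℝ) < n := lt_trans hα0 hαn
  have hs0 : 0 < α / n := div_pos hα0 hn0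
  have hs1 : α / n < 1 := (div_lt_one hn0).2 hαn
  have e1 : ((2:ℝ) ^ ((n:ℝ) - α) * (2:ℝ) ^ (1 - α / (n:ℝ))) =
      2 ^ ((n:ℝ) - α + (1 - α / n)) := (Real.rpow_add two_pos _ _).symm
  have e2 : ((2:ℝ) ^ ((n:ℝ) - α + (1 - α / n))) ^ (q - 1) =
      2 ^ (((n:ℝ) - α + (1 - α / n)) * ((q:ℝ) - 1)) := by
    rw [← Real.rpow_natCast ((2:ℝ) ^ ((n:ℝ) - α + (1 - α / n))) (q - 1),
      ← Real.rpow_mul (by norm_num : (0:ℝ) ≤ 2)]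
    congr 1
    rw [Nat.cast_sub hq]
    norm_num
  have e3 : ((2:ℝ) ^ (k + h - j)) ^ (1 - α / n) =
      2 ^ (((k:ℝ) + h - j) * (1 - α / n)) := by
    rw [show ((k:ℝ) + h - j) = ((k + h - j : ℤ) : ℝ) by push_cast; ring,
      ← Real.rpow_intCast 2 (k + h - j), ← Real.rpow_mul (by norm_num : (0:ℝ) ≤ 2)]
  have e4 : ((2:ℝ) ^ (k + h - ℓ - 2))⁻¹ = 2 ^ (-((k:ℝ) + h - ℓ - 2)) := by
    rw [show -((k:ℝ) + h - ℓ - 2) = ((-(k + h - ℓ - 2) : ℤ) : ℝ) by push_cast; ring,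
      Real.rpow_intCast 2 (-(k + h - ℓ - 2)), zpow_neg]
  have e5 : (2:ℝ) ^ (j - ℓ + 1) = 2 ^ ((j:ℝ) - ℓ + 1) := by
    rw [show ((j:ℝ) - ℓ + 1) = ((j - ℓ + 1 : ℤ) : ℝ) by push_cast; ring,
      Real.rpow_intCast 2 (j - ℓ + 1)]
  have e6 : (2:ℝ) * (2:ℝ) ^ ((j:ℝ) - ℓ + 1) = 2 ^ (1 + ((j:ℝ) - ℓ + 1)) := by
    rw [Real.rpow_add two_pos 1 ((j:ℝ) - ℓ + 1), Real.rpow_one]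
  have e7 : (2:ℝ) ^ ((n + 1) * q + 4) = 2 ^ ((((n + 1) * q + 4 : ℕ)) : ℝ) :=
    (Real.rpow_natCast 2 _).symm
  rw [e1, e2, e3, e4, e5, e6, e7]
  rw [← Real.rpow_add two_pos, ← Real.rpow_add two_pos, ← Real.rpow_add two_pos,
    ← Real.rpow_add two_pos, ← Real.rpow_add two_pos]
  apply Real.rpow_le_rpow_of_exponent_le one_le_two
  push_cast
  have key : (n:ℝ) - α + ((n:ℝ) - α + (1 - α / n)) * ((q:ℝ) - 1) ≤ ((n:ℝ) + 1) * q := by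
    have h1 : (1:ℝ) ≤ (q:ℝ) := by exact_mod_cast hq
    nlinarith [mul_nonneg (add_nonneg hα0.le hs0.le) (by linarith : (0:ℝ) ≤ (q:ℝ) - 1)]
  nlinarith [key]

lemma master (n : ℕ) (ℓ j : ℤ) (c : Pt n) (A B : Set (Pt n))
    (hAm : MeasurableSet A) (hBm : MeasurableSet B) (hAsub : A ⊆ shellAt n ℓ j c)
    (F : Pt n → ℝ≥0∞) (hFM : Measurable F) (hFtop : ∀ z, F z ≠ ⊤)
    (τ0 D : ℝ) (hτ0pos : 0 < τ0) (hD0 : 0 ≤ D)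
    (key : ∀ z ∈ A, ∀ τ ∈ Set.Icc τ0 (2 * τ0),
      F z ≤ ENNReal.ofReal D * (B.indicator F (z.1, z.2 + τ) + B.indicator F (z.1, z.2 - τ))) :
    ∫⁻ z in A, F z ≤
      ENNReal.ofReal (τ0⁻¹ * (D * (2 * (2:ℝ) ^ (j - ℓ + 1)))) * ∫⁻ z in B, F z := by
  classical
  set G := B.indicator F with hGdef
  have hGM : Measurable G := hFM.indicator hBm
  have hGtop : ∀ p, G p ≠ ⊤ := by
    intro p; rw [hGdef]
    by_cases hp : p ∈ B
    · rw [Set.indicator_of_mem hp]; exact hFtop p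
    · rw [Set.indicator_of_notMem hp]; exact ENNReal.zero_ne_top
  have hindM : Measurable (A.indicator (fun _ => (1:ℝ≥0∞))) := measurable_const.indicator hAm
  have hindtop : ∀ z, A.indicator (fun _ => (1:ℝ≥0∞)) z ≠ ⊤ := fun z => by
    by_cases hz : z ∈ A <;> simp [hz]
  have hIccm : MeasurableSet (Set.Icc τ0 (2*τ0)) := measurableSet_Icc
  have hvol : volume (Set.Icc τ0 (2*τ0)) = ENNReal.ofReal τ0 := by
    rw [Real.volume_Icc]; congr 1; ring
  have hGpM : ∀ z : Pt n, Measurable fun τ : ℝ => G (z.1, z.2 + τ) := fun z =>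
    hGM.comp (measurable_const.prodMk (measurable_const.add measurable_id))
  have hT1M : Measurable fun z : Pt n =>
      ∫⁻ τ in Set.Icc τ0 (2*τ0), (A.indicator (fun _ => (1:ℝ≥0∞)) z) * G (z.1, z.2 + τ) :=
    Measurable.lintegral_prod_right'
      (f := fun p : Pt n × ℝ => (A.indicator (fun _ => (1:ℝ≥0∞)) p.1) * G (p.1.1, p.1.2 + p.2))
      ((hindM.comp measurable_fst).mul
        (hGM.comp ((measurable_fst.fst).prodMk ((measurable_fst.snd).add measurable_snd))))
  have main1 : ENNReal.ofReal τ0 * ∫⁻ z in A, F z ≤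
      ENNReal.ofReal D * ∫⁻ z : Pt n,
        ((∫⁻ τ in Set.Icc τ0 (2*τ0), (A.indicator (fun _ => (1:ℝ≥0∞)) z) * G (z.1, z.2 + τ)) +
         (∫⁻ τ in Set.Icc τ0 (2*τ0), (A.indicator (fun _ => (1:ℝ≥0∞)) z) * G (z.1, z.2 - τ))) := by
    rw [← lintegral_indicator hAm, ← lintegral_const_mul' _ _ ofReal_ne_top,
      ← lintegral_const_mul' _ _ ofReal_ne_top]
    apply lintegral_mono
    intro z
    dsimp only
    by_cases hz : z ∈ A
    · rw [Set.indicator_of_mem hz, Set.indicator_of_mem (f := fun _ => (1:ℝ≥0∞)) hz]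
      simp only [one_mul]
      calc ENNReal.ofReal τ0 * F z
          = ∫⁻ _ in Set.Icc τ0 (2*τ0), F z := by rw [setLIntegral_const, hvol, mul_comm]
        _ ≤ ∫⁻ τ in Set.Icc τ0 (2*τ0),
              ENNReal.ofReal D * (G (z.1, z.2 + τ) + G (z.1, z.2 - τ)) :=
            setLIntegral_mono' hIccm (fun τ hτ => key z hz τ hτ)
        _ = ENNReal.ofReal D *
              ∫⁻ τ in Set.Icc τ0 (2*τ0), (G (z.1, z.2 + τ) + G (z.1, z.2 - τ)) :=
            lintegral_const_mul' _ _ ofReal_ne_top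
        _ = ENNReal.ofReal D * ((∫⁻ τ in Set.Icc τ0 (2*τ0), G (z.1, z.2 + τ)) +
              (∫⁻ τ in Set.Icc τ0 (2*τ0), G (z.1, z.2 - τ))) := by
            rw [lintegral_add_left' ((hGpM z).aemeasurable) _]
    · rw [Set.indicator_of_notMem hz, Set.indicator_of_notMem (f := fun _ => (1:ℝ≥0∞)) hz]
      simp
  have hminusEq : (∫⁻ z : Pt n, ∫⁻ τ in Set.Icc τ0 (2*τ0),
        (A.indicator (fun _ => (1:ℝ≥0∞)) z) * G (z.1, z.2 - τ)) =
      ∫⁻ z : Pt n, ∫⁻ τ in -(Set.Icc τ0 (2*τ0)),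
        (A.indicator (fun _ => (1:ℝ≥0∞)) z) * G (z.1, z.2 + τ) := by
    apply lintegral_congr; intro z
    rw [lintegral_const_mul' _ _ (hindtop z), lintegral_const_mul' _ _ (hindtop z),
      flip_integral (fun w => G (z.1, w)) (hGM.comp measurable_prodMk_left) _ hIccm z.2]
  have main2 : (∫⁻ z : Pt n,
        ((∫⁻ τ in Set.Icc τ0 (2*τ0), (A.indicator (fun _ => (1:ℝ≥0∞)) z) * G (z.1, z.2 + τ)) +
         (∫⁻ τ in Set.Icc τ0 (2*τ0), (A.indicator (fun _ => (1:ℝ≥0∞)) z) * G (z.1, z.2 - τ)))) ≤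
      2 * (ENNReal.ofReal ((2:ℝ) ^ (j - ℓ + 1)) * ∫⁻ w : Pt n, G w) := by
    rw [lintegral_add_left' hT1M.aemeasurable, hminusEq]
    exact (add_le_add
      (T_bound n ℓ j c A hAm hAsub G hGM hGtop (Set.Icc τ0 (2*τ0)) hIccm)
      (T_bound n ℓ j c A hAm hAsub G hGM hGtop (-(Set.Icc τ0 (2*τ0))) hIccm.neg)).trans_eq
      (two_mul _).symm
  have hIB : (∫⁻ w : Pt n, G w) = ∫⁻ z in B, F z := by
    rw [hGdef]; exact lintegral_indicator hBm F
  have comb : ENNReal.ofReal τ0 * ∫⁻ z in A, F z ≤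
      ENNReal.ofReal D * (2 * (ENNReal.ofReal ((2:ℝ) ^ (j - ℓ + 1)) * ∫⁻ z in B, F z)) := by
    refine main1.trans ?_
    rw [← hIB]
    exact mul_le_mul_right main2 _
  have hne : ENNReal.ofReal τ0 ≠ 0 := (ENNReal.ofReal_pos.2 hτ0pos).ne'
  calc ∫⁻ z in A, F z
      = (ENNReal.ofReal τ0)⁻¹ * (ENNReal.ofReal τ0 * ∫⁻ z in A, F z) := by
        rw [← mul_assoc, ENNReal.inv_mul_cancel hne ofReal_ne_top, one_mul]
    _ ≤ (ENNReal.ofReal τ0)⁻¹ * (ENNReal.ofReal D *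
          (2 * (ENNReal.ofReal ((2:ℝ) ^ (j - ℓ + 1)) * ∫⁻ z in B, F z))) :=
        mul_le_mul_right comb _
    _ = ENNReal.ofReal (τ0⁻¹ * (D * (2 * (2:ℝ) ^ (j - ℓ + 1)))) * ∫⁻ z in B, F z := by
        rw [← ENNReal.ofReal_inv_of_pos hτ0pos, ENNReal.ofReal_mul (inv_nonneg.2 hτ0pos.le),
          ENNReal.ofReal_mul hD0, ENNReal.ofReal_mul (by norm_num : (0:ℝ) ≤ 2),
          ENNReal.ofReal_ofNat]
        ring

theorem stmt16 (n : ℕ) (hn : 2 ≤ n) (q : ℕ) (hq : 2 ≤ q) (α : ℝ) (hα0 : 0 < α)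
    (hαn : α < n) :
    ∃ C : ℝ≥0, 0 < C ∧ ∀ (ℓ h : ℤ), 0 ≤ h → h ≤ ℓ →
      ∀ (j k : ℤ) (κ : Fin (q - 1) → ℤ), (∀ i, k ≤ κ i) → (∃ i, κ i = k) →
      j - h < k - 2 → k - 2 < j - 2 →
      ∀ (c : Pt n) (ci : Fin (q - 1) → Pt n),
        (∫⁻ z in shellAt n ℓ j c ∩ ⋂ i, shellAt n (ℓ - h) (κ i) (ci i),
          Om n α (z.1 - c.1, z.2 - c.2) *
            ∏ i, Om n α (z.1 - (ci i).1, z.2 - (ci i).2)) ≤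
        C * ENNReal.ofReal ((2:ℝ) ^ (((j:ℝ) - k - h) * (α / n))) *
          ∫⁻ z in shellStarAt n (j - k + ℓ - h) j c ∩
              ⋂ i, shellStarAt n (ℓ - h) (κ i) (ci i),
            Om n α (z.1 - c.1, z.2 - c.2) *
              ∏ i, Om n α (z.1 - (ci i).1, z.2 - (ci i).2) := by
  refine ⟨2 ^ ((n + 1) * q + 4), by positivity, ?_⟩
  intro ℓ h h0 hhl j k κ hκ _hex hjk1 hjk2 c ci
  have hj1 : j ≤ k + h - 3 := by omega
  have hk1 : k + 1 ≤ j := by omega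
  have hτ0pos : (0:ℝ) < (2:ℝ) ^ (k + h - ℓ - 2) := zpow_pos two_pos _
  have hD0 : (0:ℝ) ≤ ((2:ℝ) ^ ((n:ℝ) - α) * ((2:ℝ) ^ (k + h - j)) ^ (1 - α / n)) *
      ((2:ℝ) ^ ((n:ℝ) - α) * (2:ℝ) ^ (1 - α / (n:ℝ))) ^ (q - 1) := by positivity
  have h2τ0 : 2 * (2:ℝ) ^ (k + h - ℓ - 2) = (2:ℝ) ^ (k + h - ℓ - 1) := by
    rw [show k + h - ℓ - 1 = (k + h - ℓ - 2) + 1 by ring,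
      zpow_add₀ (by norm_num : (2:ℝ) ≠ 0), zpow_one]
    ring
  have hkey : ∀ z ∈ shellAt n ℓ j c ∩ ⋂ i, shellAt n (ℓ - h) (κ i) (ci i),
      ∀ τ ∈ Set.Icc ((2:ℝ) ^ (k + h - ℓ - 2)) (2 * (2:ℝ) ^ (k + h - ℓ - 2)),
      (fun z : Pt n => Om n α (z.1 - c.1, z.2 - c.2) *
          ∏ i, Om n α (z.1 - (ci i).1, z.2 - (ci i).2)) z ≤
        ENNReal.ofReal (((2:ℝ) ^ ((n:ℝ) - α) * ((2:ℝ) ^ (k + h - j)) ^ (1 - α / n)) *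
            ((2:ℝ) ^ ((n:ℝ) - α) * (2:ℝ) ^ (1 - α / (n:ℝ))) ^ (q - 1)) *
          ((shellStarAt n (j - k + ℓ - h) j c ∩
              ⋂ i, shellStarAt n (ℓ - h) (κ i) (ci i)).indicator
            (fun z : Pt n => Om n α (z.1 - c.1, z.2 - c.2) *
              ∏ i, Om n α (z.1 - (ci i).1, z.2 - (ci i).2)) (z.1, z.2 + τ) +
           (shellStarAt n (j - k + ℓ - h) j c ∩
              ⋂ i, shellStarAt n (ℓ - h) (κ i) (ci i)).indicator
            (fun z : Pt n => Om n α (z.1 - c.1, z.2 - c.2) *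
              ∏ i, Om n α (z.1 - (ci i).1, z.2 - (ci i).2)) (z.1, z.2 - τ)) := by
    intro z hz τ hτ
    obtain ⟨t', ht'or, hsc, hsi, hle⟩ :=
      keyPointwise n (q - 1) α hα0 hαn ℓ h j k κ hκ h0 hhl hj1 hk1 c ci z hz.1
        (fun i => Set.mem_iInter.1 hz.2 i) τ hτ.1 (h2τ0 ▸ hτ.2)
    have hmem : ((z.1, t') : Pt n) ∈ shellStarAt n (j - k + ℓ - h) j c ∩
        ⋂ i, shellStarAt n (ℓ - h) (κ i) (ci i) := ⟨hsc, Set.mem_iInter.2 hsi⟩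
    have hGF : (shellStarAt n (j - k + ℓ - h) j c ∩
        ⋂ i, shellStarAt n (ℓ - h) (κ i) (ci i)).indicator
          (fun z : Pt n => Om n α (z.1 - c.1, z.2 - c.2) *
            ∏ i, Om n α (z.1 - (ci i).1, z.2 - (ci i).2)) (z.1, t') =
        Om n α (z.1 - c.1, t' - c.2) * ∏ i, Om n α (z.1 - (ci i).1, t' - (ci i).2) :=
      Set.indicator_of_mem hmem _
    rcases ht'or with h' | h'
    · rw [h'] at hGF hle
      rw [← hGF] at hle
      exact hle.trans (mul_le_mul_right le_self_add _)
    · rw [h'] at hGF hle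
      rw [← hGF] at hle
      exact hle.trans (mul_le_mul_right le_add_self _)
  have hOmM : ∀ w : Pt n, Measurable fun z : Pt n => Om n α (z.1 - w.1, z.2 - w.2) :=
    fun w => measurable_Om_shift n α w
  have hFM : Measurable (fun z : Pt n => Om n α (z.1 - c.1, z.2 - c.2) *
      ∏ i, Om n α (z.1 - (ci i).1, z.2 - (ci i).2)) :=
    (hOmM c).mul (Finset.measurable_prod _ fun i _ => hOmM (ci i))
  have hFtop : ∀ z : Pt n, (fun z : Pt n => Om n α (z.1 - c.1, z.2 - c.2) *
      ∏ i, Om n α (z.1 - (ci i).1, z.2 - (ci i).2)) z ≠ ⊤ := by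
    intro z
    have h1 : ∀ p : Pt n, Om n α p ≠ ⊤ := fun p => ofReal_ne_top
    exact ENNReal.mul_ne_top (h1 _)
      (ENNReal.prod_ne_top fun i _ => h1 _)
  have hmaster := master n ℓ j c
    (shellAt n ℓ j c ∩ ⋂ i, shellAt n (ℓ - h) (κ i) (ci i))
    (shellStarAt n (j - k + ℓ - h) j c ∩ ⋂ i, shellStarAt n (ℓ - h) (κ i) (ci i))
    ((measurableSet_shellAt n ℓ j c).inter
      (MeasurableSet.iInter fun i => measurableSet_shellAt n (ℓ - h) (κ i) (ci i)))
    ((measurableSet_shellStarAt n (j - k + ℓ - h) j c).inter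
      (MeasurableSet.iInter fun i => measurableSet_shellStarAt n (ℓ - h) (κ i) (ci i)))
    Set.inter_subset_left _ hFM hFtop _ _ hτ0pos hD0 hkey
  refine hmaster.trans ?_
  have hC : ((2 ^ ((n + 1) * q + 4) : ℝ≥0) : ℝ≥0∞) *
      ENNReal.ofReal ((2:ℝ) ^ (((j:ℝ) - k - h) * (α / n))) =
      ENNReal.ofReal ((2:ℝ) ^ ((n + 1) * q + 4) *
        (2:ℝ) ^ (((j:ℝ) - k - h) * (α / n))) := by
    rw [ENNReal.ofReal_mul (by positivity)]
    congr 1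
    rw [show ((2:ℝ) ^ ((n + 1) * q + 4)) = (((2 ^ ((n + 1) * q + 4) : ℝ≥0) : ℝ)) by
      push_cast; norm_num]
    exact ENNReal.ofReal_coe_nnreal.symm
  rw [hC]
  exact mul_le_mul_left (ENNReal.ofReal_le_ofReal
    (final_const n q α hα0 hαn (by omega) ℓ h j k)) _

end
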